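/- If n_C ≥ n_B, f*: B → C* is non-decreasing, and r_0 ≥ r_1 ≥ ... ≥ r_{n_B−1} are the values 1/2 + |b − f*(b)| (b ∈ B) listed in non-increasing order with multiplicity, then r_t ≤ (n_B + n_C)/2 − t for all 0 ≤ t ≤ n_B − 1. -/

import Mathlib

/-- If `n_C ≥ n_B`, `f* : B → C*` is non-decreasing, and
`r_0 ≥ r_1 ≥ … ≥ r_{n_B−1}` lists the values `1/2 + |b − f*(b)|` (for `b ∈ B`) in
non-increasing order with multiplicity, then `r_t ≤ (n_B + n_C)/2 − t` for all `t`. -/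
theorem block_intertwining_sorted_bound
    (nB nC : ℕ) (hnB : 1 ≤ nB) (hBC : nB ≤ nC)
    (f : Fin nB → ℝ)
    (hrange : ∀ i, ∃ m : ℕ, m ≤ nC ∧ f i = (m : ℝ) - (nC : ℝ) / 2)
    (hmono : Monotone f)
    (r : Fin nB → ℝ) (hr : Antitone r)
    (hperm : ∃ e : Equiv.Perm (Fin nB),
      ∀ i, r i = 1 / 2 + |((e i : ℕ) : ℝ) - ((nB : ℝ) - 1) / 2 - f (e i)|) :
    ∀ t : Fin nB, r t ≤ ((nB : ℝ) + (nC : ℝ)) / 2 - (t : ℝ) := by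
  obtain ⟨e, he⟩ := hperm
  choose m hmle hmf using hrange
  have hmmono : ∀ i j : Fin nB, i ≤ j → m i ≤ m j := by
    intro i j hij
    have h := hmono hij
    rw [hmf i, hmf j] at h
    have h' : (m i : ℝ) ≤ m j := by linarith
    exact_mod_cast h'
  intro t
  by_contra hcon
  push_neg at hcon
  set X : ℝ := ((nB : ℝ) + (nC : ℝ)) / 2 - (t : ℝ) with hXdef
  have hdich : ∀ i : Fin nB,
      X < 1 / 2 + |((i : ℕ) : ℝ) - ((nB : ℝ) - 1) / 2 - f i| →
      ((nC : ℤ) - (t : ℕ) + 1 ≤ (m i : ℤ) - (i : ℕ)) ∨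
      ((nB : ℤ) - (t : ℕ) ≤ ((i : ℕ) : ℤ) - (m i : ℤ)) := by
    intro i hi
    rw [hmf i] at hi
    have habs : (((nB : ℤ) + nC - 1 - 2 * (t : ℕ) : ℤ) : ℝ)
        < |((2 * ((i : ℕ) : ℤ) - 2 * (m i : ℤ) + (nC : ℤ) - nB + 1 : ℤ) : ℝ)| := by
      have heq : ((2 * ((i : ℕ) : ℤ) - 2 * (m i : ℤ) + (nC : ℤ) - nB + 1 : ℤ) : ℝ)
          = 2 * (((i : ℕ) : ℝ) - ((nB : ℝ) - 1) / 2 - ((m i : ℝ) - (nC : ℝ) / 2)) := by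
        push_cast; ring
      rw [heq, abs_mul, abs_two]
      push_cast
      rw [hXdef] at hi
      linarith
    have habsz : ((nB : ℤ) + nC - 1 - 2 * (t : ℕ))
        < |2 * ((i : ℕ) : ℤ) - 2 * (m i : ℤ) + (nC : ℤ) - nB + 1| := by
      exact_mod_cast habs
    rcases lt_abs.mp habsz with h | h
    · right; omega
    · left; omega
  have key : (Finset.univ.filter (fun i : Fin nB =>
      X < 1 / 2 + |((i : ℕ) : ℝ) - ((nB : ℝ) - 1) / 2 - f i|)).card ≤ (t : ℕ) := by
    have hcard := Finset.card_le_card_of_injOn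
      (f := fun i : Fin nB =>
        if (nC : ℤ) - (t : ℕ) + 1 ≤ (m i : ℤ) - (i : ℕ) then (i : ℕ)
        else (i : ℕ) - (nB - (t : ℕ)))
      (s := Finset.univ.filter (fun i : Fin nB =>
        X < 1 / 2 + |((i : ℕ) : ℝ) - ((nB : ℝ) - 1) / 2 - f i|))
      (t := Finset.range (t : ℕ)) ?_ ?_
    · simpa using hcard
    · intro a ha
      rw [Finset.mem_coe, Finset.mem_filter] at ha
      rw [Finset.mem_coe, Finset.mem_range]
      dsimp only
      rcases hdich a ha.2 with h1 | h2
      · rw [if_pos h1]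
        have := hmle a
        omega
      · by_cases hc : (nC : ℤ) - (t : ℕ) + 1 ≤ (m a : ℤ) - (a : ℕ)
        · rw [if_pos hc]
          have := hmle a
          omega
        · rw [if_neg hc]
          have h3 := a.isLt
          omega
    · intro a ha b hb hab
      simp only [Finset.coe_filter, Set.mem_setOf_eq, Finset.mem_univ, true_and] at ha hb
      beta_reduce at hab
      have hta := hmle a
      have htb := hmle b
      have hlta := a.isLt
      have hltb := b.isLt
      by_cases hca : (nC : ℤ) - (t : ℕ) + 1 ≤ (m a : ℤ) - (a : ℕ) <;>
        by_cases hcb : (nC : ℤ) - (t : ℕ) + 1 ≤ (m b : ℤ) - (b : ℕ)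
      · rw [if_pos hca, if_pos hcb] at hab
        exact Fin.ext hab
      · -- a in N branch, b in P branch
        rw [if_pos hca, if_neg hcb] at hab
        rcases hdich b hb with h1 | h2
        · exact absurd h1 hcb
        · -- b ≥ nB - t, a = b - (nB - t) < b, m a ≤ m b
          exfalso
          have hble : (a : ℕ) ≤ (b : ℕ) := by omega
          have hmab := hmmono a b (Fin.le_def.mpr hble)
          omega
      · rw [if_neg hca, if_pos hcb] at hab
        rcases hdich a ha with h1 | h2
        · exact absurd h1 hca
        · exfalso
          have hble : (b : ℕ) ≤ (a : ℕ) := by omega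
          have hmab := hmmono b a (Fin.le_def.mpr hble)
          omega
      · rw [if_neg hca, if_neg hcb] at hab
        rcases hdich a ha with h1 | h2
        · exact absurd h1 hca
        rcases hdich b hb with h1' | h2'
        · exact absurd h1' hcb
        apply Fin.ext
        omega
  have hcard : (Finset.univ.filter fun i : Fin nB => X < r i).card
      = (Finset.univ.filter (fun i : Fin nB =>
        X < 1 / 2 + |((i : ℕ) : ℝ) - ((nB : ℝ) - 1) / 2 - f i|)).card := by
    apply Finset.card_bij (fun a _ => e a)
    · intro a ha
      simp only [Finset.mem_filter] at ha ⊢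
      exact ⟨Finset.mem_univ _, by rw [← he a]; exact ha.2⟩
    · intro a _ b _ hab
      exact e.injective hab
    · intro b hb
      simp only [Finset.mem_filter] at hb
      refine ⟨e.symm b, ?_, by simp⟩
      simp only [Finset.mem_filter]
      refine ⟨Finset.mem_univ _, ?_⟩
      rw [he (e.symm b)]
      simpa using hb.2
  have hsub : Finset.Iic t ⊆ Finset.univ.filter fun i : Fin nB => X < r i := by
    intro s hs
    simp only [Finset.mem_Iic] at hs
    simp only [Finset.mem_filter]
    exact ⟨Finset.mem_univ _, lt_of_lt_of_le hcon (hr hs)⟩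
  have hle := Finset.card_le_card hsub
  rw [Fin.card_Iic, hcard] at hle
  omega
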